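/- Suppose 0 < α < 1, 1-α² < γ < 1, m,g,R,I₃ > 0, β = 2mgR³αI₃γ²(γ+α²-1), λ = Cλ_thres with C > 1 where λ_thres = √(mgR³I₃α)(1+α)²/√(1+α-γ), and 0 < ε ≤ 1 (a small parameter, with ε here denoting a geometric tolerance, not 2β/b²). Then (αγλ)² - (β/2)(2-ε)²(1+α)² > 0. -/

import Mathlib

theorem stmt_8 (m grav R I₃ α γ lam C ε : ℝ)
    (hm : 0 < m) (hg : 0 < grav) (hR : 0 < R) (hI₃ : 0 < I₃)
    (hα : 0 < α) (hα1 : α < 1) (hγl : 1 - α^2 < γ) (hγu : γ < 1)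
    (hC : 1 < C)
    (hlam : lam = C * (Real.sqrt (m*grav*R^3*I₃*α) * (1+α)^2 / Real.sqrt (1 + α - γ)))
    (hε : 0 < ε) (hε1 : ε ≤ 1) :
    0 < (α*γ*lam)^2
        - (2*m*grav*R^3*α*I₃*γ^2*(γ + α^2 - 1)) / 2 * (2 - ε)^2 * (1+α)^2 := by
  have h1 : 0 < 1 + α - γ := by linarith
  have hKα : (0:ℝ) < m*grav*R^3*I₃*α := by positivity
  have hs2 : Real.sqrt (m*grav*R^3*I₃*α) ^ 2 = m*grav*R^3*I₃*α := Real.sq_sqrt hKα.le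
  have ht2 : Real.sqrt (1+α-γ) ^ 2 = 1+α-γ := Real.sq_sqrt h1.le
  have htpos : 0 < Real.sqrt (1+α-γ) := Real.sqrt_pos.mpr h1
  have hlam2 : lam^2 * (1+α-γ) = C^2 * (m*grav*R^3*I₃*α) * ((1+α)^2)^2 := by
    rw [hlam, mul_pow, div_pow, mul_pow, hs2, ht2]
    field_simp
  have hγpos : 0 < γ := by nlinarith [sq_nonneg α]
  have hg1 : 0 < γ + α^2 - 1 := by nlinarith
  have h4 : (γ+α^2-1)*(1+α-γ) ≤ (α^2*(1+α)^2)/4 := by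
    nlinarith [sq_nonneg (γ+α^2-1-(1+α-γ))]
  have h5 : (2-ε)^2 < 4 := by nlinarith
  have key : (γ+α^2-1)*(1+α-γ)*(2-ε)^2 < α^2*(1+α)^2 := by
    calc (γ+α^2-1)*(1+α-γ)*(2-ε)^2 ≤ (α^2*(1+α)^2)/4 * (2-ε)^2 :=
          mul_le_mul_of_nonneg_right h4 (sq_nonneg _)
      _ < (α^2*(1+α)^2)/4 * 4 := by
          apply mul_lt_mul_of_pos_left h5; positivity
      _ = α^2*(1+α)^2 := by ring
  have hC2 : 1 ≤ C^2 := by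
    have h0 : (0:ℝ) ≤ C := by linarith
    calc (1:ℝ) = 1*1 := by ring
      _ ≤ C*C := mul_le_mul hC.le hC.le zero_le_one h0
      _ = C^2 := by ring
  have hbig : 0 < ((α*γ*lam)^2
      - (2*m*grav*R^3*α*I₃*γ^2*(γ + α^2 - 1)) / 2 * (2 - ε)^2 * (1+α)^2) * (1+α-γ) := by
    have e : ((α*γ*lam)^2
        - (2*m*grav*R^3*α*I₃*γ^2*(γ + α^2 - 1)) / 2 * (2 - ε)^2 * (1+α)^2) * (1+α-γ)
        = α^2*γ^2*(lam^2*(1+α-γ))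
          - (m*grav*R^3*I₃*α)*γ^2*((γ+α^2-1)*(1+α-γ)*(2-ε)^2)*(1+α)^2 := by ring
    rw [e, hlam2]
    have h6 : (m*grav*R^3*I₃*α)*γ^2*((γ+α^2-1)*(1+α-γ)*(2-ε)^2)*(1+α)^2
        < (m*grav*R^3*I₃*α)*γ^2*(α^2*(1+α)^2)*(1+α)^2 := by
      apply mul_lt_mul_of_pos_right _ (by positivity)
      apply mul_lt_mul_of_pos_left key (by positivity)
    have h7 : (m*grav*R^3*I₃*α)*γ^2*(α^2*(1+α)^2)*(1+α)^2
        ≤ α^2*γ^2*(C^2*(m*grav*R^3*I₃*α)*((1+α)^2)^2) := by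
      have hP : (0:ℝ) ≤ (m*grav*R^3*I₃*α)*γ^2*(α^2*(1+α)^2)*(1+α)^2 := by positivity
      calc (m*grav*R^3*I₃*α)*γ^2*(α^2*(1+α)^2)*(1+α)^2
          = 1 * ((m*grav*R^3*I₃*α)*γ^2*(α^2*(1+α)^2)*(1+α)^2) := by ring
        _ ≤ C^2 * ((m*grav*R^3*I₃*α)*γ^2*(α^2*(1+α)^2)*(1+α)^2) :=
            mul_le_mul_of_nonneg_right hC2 hP
        _ = α^2*γ^2*(C^2*(m*grav*R^3*I₃*α)*((1+α)^2)^2) := by ring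
    linarith [h6, h7]
  exact (mul_pos_iff_of_pos_right h1).mp hbig
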